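/- Let Γ be a finite negative definite tree with lattice L = ⊕_w ℤE_w carrying the intersection form, dual lattice L' with dual basis E*_w, and a fixed vertex v. Let Γ_i be the components of Γ ∖ v, and for x ∈ L' let x_i = R_i(x) ∈ L'_i be the restriction characterized by (x_i, E_w) = (x, E_w) for all w ∈ V(Γ_i). Set d = det(-I) and a_{vv} = -d·(I^{-1})_{vv}. Then x − Σ_i x_i = −(d·(x, E*_v)/a_{vv})·E*_v in L' ⊗ ℚ (where each L'_i is included in L' ⊗ ℚ via the orthogonal-extension identification). -/

import Mathlib

open BigOperators Matrix

theorem stmt12 (V : Type*) [Fintype V] [DecidableEq V]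
    (G : SimpleGraph V) [DecidableRel G.Adj] (hG : G.IsTree)
    (I : Matrix V V ℤ)
    (hoff : ∀ u w : V, u ≠ w → I u w = if G.Adj u w then 1 else 0)
    (hneg : Matrix.PosDef ((-I).map ((↑) : ℤ → ℝ)))
    (v : V)
    -- `d = det (-I)` and `a_{vv} = -d (I⁻¹)_{vv}`
    (dd : ℚ) (hdd : dd = (((-I).det : ℤ) : ℚ))
    (av : ℚ) (hav : av = -dd * ((I.map ((↑) : ℤ → ℚ))⁻¹ v v))
    -- `e = E^*_v`, the dual basis vector at `v`
    (e : V → ℚ) (he : e = (I.map ((↑) : ℤ → ℚ))⁻¹ *ᵥ Pi.single v 1)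
    (x y : V → ℚ)
    -- `y = ∑ i x_i` is the sum of the restrictions of `x` to the components of
    -- `Γ ∖ v`: it is supported away from `v` and pairs with each `E_w`, `w ≠ v`,
    -- exactly as `x` does
    (hy0 : y v = 0)
    (hyw : ∀ w : V, w ≠ v →
      y ⬝ᵥ ((I.map ((↑) : ℤ → ℚ)) *ᵥ Pi.single w 1)
        = x ⬝ᵥ ((I.map ((↑) : ℤ → ℚ)) *ᵥ Pi.single w 1)) :
    x - y = (-(dd * (x ⬝ᵥ ((I.map ((↑) : ℤ → ℚ)) *ᵥ e))) / av) • e := by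
  set J : Matrix V V ℚ := I.map ((↑) : ℤ → ℚ) with hJ
  -- symmetry of I, hence of J
  have hIsym : Iᵀ = I := by
    funext u w
    by_cases h : u = w
    · simp [h]
    · rw [Matrix.transpose_apply, hoff w u (Ne.symm h), hoff u w h]
      simp [G.adj_comm]
  have hJsym : Jᵀ = J := by
    funext u w
    simp only [hJ, Matrix.transpose_apply, Matrix.map_apply]
    rw [← Matrix.transpose_apply I, hIsym]
  -- nonvanishing determinant
  have hdetRpos : 0 < ((-I).map ((↑) : ℤ → ℝ)).det := hneg.det_pos
  have hdetcast : ((-I).map ((↑) : ℤ → ℝ)).det = (((-I).det : ℤ) : ℝ) := by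
    have := (RingHom.map_det (Int.castRingHom ℝ) (-I)).symm
    simpa [RingHom.mapMatrix_apply] using this
  have hdIpos : (0 : ℤ) < (-I).det := by
    have := hdetRpos
    rw [hdetcast] at this
    exact_mod_cast this
  have hddpos : 0 < dd := by rw [hdd]; exact_mod_cast hdIpos
  have hddne : dd ≠ 0 := ne_of_gt hddpos
  have hdetnegJ : (-J).det ≠ 0 := by
    have : (-J) = (-I).map ((↑) : ℤ → ℚ) := by
      funext u w; simp [hJ]
    rw [this]
    have h2 := (RingHom.map_det (Int.castRingHom ℚ) (-I)).symm
    rw [RingHom.mapMatrix_apply] at h2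
    simp only [Int.coe_castRingHom] at h2
    rw [h2]
    have : ((-I).det : ℚ) ≠ 0 := by exact_mod_cast ne_of_gt hdIpos
    exact_mod_cast this
  have hdetJ : J.det ≠ 0 := by
    intro h
    apply hdetnegJ
    rw [Matrix.det_neg, h, mul_zero]
  have hinv : J * J⁻¹ = 1 := Matrix.mul_nonsing_inv _ (isUnit_iff_ne_zero.2 hdetJ)
  -- J *ᵥ e = single v 1
  have hJe : J *ᵥ e = Pi.single v 1 := by
    rw [he, Matrix.mulVec_mulVec, hinv, Matrix.one_mulVec]
  have hev : e v = J⁻¹ v v := by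
    rw [he]
    simp [Matrix.mulVec_single]
  -- e ≠ 0
  have hene : e ≠ 0 := by
    intro h
    have := congrFun hJe v
    rw [h] at this
    simp at this
  -- e v < 0
  have hdot : e ⬝ᵥ (J *ᵥ e) = e v := by
    rw [hJe]; simp
  have hevneg : e v < 0 := by
    set er : V → ℝ := fun w => ((e w : ℚ) : ℝ) with her
    have herne : er ≠ 0 := by
      intro h
      apply hene
      funext w
      have := congrFun h w
      simp [her] at this
      exact this
    have hpos := (Matrix.posDef_iff_dotProduct_mulVec.mp hneg).2 herne
    have hcast : star er ⬝ᵥ (((-I).map ((↑) : ℤ → ℝ)) *ᵥ er)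
        = ((-(e ⬝ᵥ (J *ᵥ e)) : ℚ) : ℝ) := by
      simp only [dotProduct, Matrix.mulVec, star_trivial, her, hJ,
        Matrix.map_apply, Matrix.neg_apply]
      push_cast
      simp [mul_neg, Finset.sum_neg_distrib]
    rw [hcast, hdot] at hpos
    have : (0 : ℝ) < ((-(e v) : ℚ) : ℝ) := hpos
    have : (0 : ℚ) < -(e v) := by exact_mod_cast this
    linarith
  have hevne : e v ≠ 0 := ne_of_lt hevneg
  -- the key vanishing
  set c : ℚ := ((x - y) ᵥ* J) v with hc
  have hkey : (x - y) ᵥ* J = c • (Pi.single v 1 : V → ℚ) := by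
    funext w
    by_cases h : w = v
    · subst h; simp [hc]
    · have h1 := hyw w h
      have h2 : ∀ z : V → ℚ, z ⬝ᵥ (J *ᵥ Pi.single w 1) = (z ᵥ* J) w := by
        intro z
        simp [Matrix.mulVec_single, Matrix.vecMul, dotProduct]
      rw [h2, h2] at h1
      have : ((x - y) ᵥ* J) w = (x ᵥ* J) w - (y ᵥ* J) w := by
        simp [Matrix.vecMul, dotProduct, Finset.sum_sub_distrib, sub_mul]
      rw [this, h1]
      simp [Pi.single_apply, h]
  have h3 : (J⁻¹)ᵀ = J⁻¹ := by rw [Matrix.transpose_nonsing_inv, hJsym]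
  have hxy : x - y = c • e := by
    have h1 : (x - y) ᵥ* (J * J⁻¹) = x - y := by rw [hinv, Matrix.vecMul_one]
    rw [← Matrix.vecMul_vecMul, hkey] at h1
    funext u
    have h4 := congrFun h1 u
    have hL : ((c • (Pi.single v 1 : V → ℚ)) ᵥ* J⁻¹) u = c * J⁻¹ v u := by
      simp [Matrix.vecMul, dotProduct, Pi.single_apply, ite_mul, mul_ite]
    have hsymuv : J⁻¹ v u = J⁻¹ u v := by
      have := congrFun (congrFun h3 v) u
      simpa using this.symm
    have hR : (c • e) u = c * J⁻¹ u v := by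
      rw [he]; simp [Matrix.mulVec_single]
    rw [← h4, hL, hR, hsymuv]
  -- c = x v / e v
  have hcev : c * e v = x v := by
    have := congrFun hxy v
    simp [hy0] at this
    linarith [this]
  rw [hxy]
  congr 1
  rw [hJe]
  have hxv : x ⬝ᵥ Pi.single v 1 = x v := by simp
  rw [hxv, hav, ← hev, ← hcev]
  field_simp
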